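/- Let n ≥ 2, 0 < α < n, −R < μ < 0, and let ρ̄ : ℝⁿ → ℝ be bounded, vanishing outside B(0,R), and satisfying ρ̄(x) = α ∫_{B(0,R)} |x−y|^(α−n) ρ̄(y) dy for x ∈ B(0,R). Let x^μ denote reflection across {x₁ = μ}, ρ̄_μ(x) = ρ̄(x^μ), and Σ_μ = {x ∈ B(0,R) : x₁ ≥ μ}. Then for every x ∈ Σ_μ ∩ B(0^μ, R), ρ̄(x) − ρ̄_μ(x) = α ∫_{Σ_μ} (|x−y|^(α−n) − |x^μ−y|^(α−n)) (ρ̄(y) − ρ̄_μ(y)) dy. -/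

import Mathlib

open MeasureTheory Metric Set Real

noncomputable def reflect (n : ℕ) (μ : ℝ) (x : EuclideanSpace ℝ (Fin n)) :
    EuclideanSpace ℝ (Fin n) :=
  WithLp.toLp 2 (fun i : Fin n => if (i : ℕ) = 0 then 2 * μ - x i else x i)

lemma reflect_involutive (n : ℕ) (μ : ℝ) : Function.Involutive (reflect n μ) := by
  intro x; ext i; simp only [reflect, PiLp.toLp_apply]; split_ifs with h <;> ring

noncomputable def negFirst (n : ℕ) : EuclideanSpace ℝ (Fin n) ≃ₗᵢ[ℝ] EuclideanSpace ℝ (Fin n) where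
  toLinearEquiv :=
  { toFun := fun x => (WithLp.toLp 2 (fun i : Fin n => if (i:ℕ) = 0 then -x i else x i) : EuclideanSpace ℝ (Fin n))
    invFun := fun x => (WithLp.toLp 2 (fun i : Fin n => if (i:ℕ) = 0 then -x i else x i) : EuclideanSpace ℝ (Fin n))
    map_add' := by
      intro x y; ext i
      by_cases h : (i:ℕ) = 0 <;> simp [h, PiLp.add_apply] <;> ring
    map_smul' := by
      intro c x; ext i
      by_cases h : (i:ℕ) = 0 <;> simp [h, PiLp.smul_apply, smul_eq_mul] <;> ring
    left_inv := by intro x; ext i; by_cases h : (i:ℕ) = 0 <;> simp [h]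
    right_inv := by intro x; ext i; by_cases h : (i:ℕ) = 0 <;> simp [h] }
  norm_map' := by
    intro x
    rw [EuclideanSpace.norm_eq, EuclideanSpace.norm_eq]
    congr 1
    refine Finset.sum_congr rfl fun i _ => ?_
    show ‖if (i:ℕ) = 0 then -x i else x i‖ ^ 2 = ‖x i‖ ^ 2
    split_ifs with h <;> simp

noncomputable def vshift (n : ℕ) (μ : ℝ) : EuclideanSpace ℝ (Fin n) :=
  WithLp.toLp 2 (fun i : Fin n => if (i:ℕ) = 0 then 2*μ else 0)

lemma negFirst_apply (n : ℕ) (x : EuclideanSpace ℝ (Fin n)) (i : Fin n) :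
    negFirst n x i = if (i:ℕ) = 0 then -x i else x i := rfl

lemma reflect_eq (n : ℕ) (μ : ℝ) (x : EuclideanSpace ℝ (Fin n)) :
    reflect n μ x = vshift n μ + negFirst n x := by
  ext i
  simp only [PiLp.add_apply, reflect, negFirst_apply, vshift, PiLp.toLp_apply]
  split_ifs with h <;> ring

lemma reflect_sub (n : ℕ) (μ : ℝ) (x y : EuclideanSpace ℝ (Fin n)) :
    reflect n μ x - reflect n μ y = negFirst n (x - y) := by
  ext i
  show reflect n μ x i - reflect n μ y i = negFirst n (x - y) i
  simp only [reflect, negFirst_apply, PiLp.sub_apply, PiLp.toLp_apply]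
  split_ifs with h <;> ring

lemma norm_reflect_sub (n : ℕ) (μ : ℝ) (x y : EuclideanSpace ℝ (Fin n)) :
    ‖reflect n μ x - reflect n μ y‖ = ‖x - y‖ := by
  rw [reflect_sub]; exact (negFirst n).norm_map _

lemma measurePreserving_reflect (n : ℕ) (μ : ℝ) :
    MeasurePreserving (reflect n μ) (volume : Measure (EuclideanSpace ℝ (Fin n))) volume := by
  have h : reflect n μ = (fun z => vshift n μ + z) ∘ (negFirst n) :=
    funext fun x => reflect_eq n μ x
  rw [h]
  exact (measurePreserving_add_left volume _).comp (negFirst n).measurePreserving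

lemma measurableEmbedding_reflect (n : ℕ) (μ : ℝ) :
    MeasurableEmbedding (reflect n μ) :=
  (MeasurableEquiv.ofInvolutive _ (reflect_involutive n μ)
    (measurePreserving_reflect n μ).measurable).measurableEmbedding

lemma norm_le_norm_reflect (n : ℕ) (μ : ℝ) (hμ : μ < 0) (x : EuclideanSpace ℝ (Fin n))
    (i0 : Fin n) (hi0 : (i0:ℕ) = 0) (hz : μ ≤ x i0) : ‖x‖ ≤ ‖reflect n μ x‖ := by
  rw [EuclideanSpace.norm_eq, EuclideanSpace.norm_eq]
  apply Real.sqrt_le_sqrt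
  refine Finset.sum_le_sum fun i _ => ?_
  show ‖x i‖ ^ 2 ≤ ‖reflect n μ x i‖ ^ 2
  simp only [reflect, PiLp.toLp_apply]
  split_ifs with h
  · have hii : i0 = i := Fin.ext (by omega)
    subst hii
    rw [Real.norm_eq_abs, Real.norm_eq_abs, sq_abs, sq_abs]
    nlinarith [mul_nonneg (by linarith : (0:ℝ) ≤ -4*μ) (by linarith : (0:ℝ) ≤ x i0 - μ)]
  · exact le_refl _

lemma mem_ball_reflect (n : ℕ) (μ R : ℝ) (z : EuclideanSpace ℝ (Fin n)) :
    z ∈ ball (reflect n μ 0) R ↔ reflect n μ z ∈ ball (0 : EuclideanSpace ℝ (Fin n)) R := by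
  rw [mem_ball, mem_ball, dist_eq_norm, dist_eq_norm]
  constructor <;> intro h
  · calc ‖reflect n μ z - 0‖ = ‖reflect n μ z - reflect n μ (reflect n μ 0)‖ := by
          rw [reflect_involutive n μ 0]
      _ = ‖z - reflect n μ 0‖ := norm_reflect_sub n μ _ _
      _ < R := h
  · calc ‖z - reflect n μ 0‖ = ‖reflect n μ z - reflect n μ (reflect n μ 0)‖ :=
          (norm_reflect_sub n μ _ _).symm
      _ = ‖reflect n μ z - 0‖ := by rw [reflect_involutive n μ 0]
      _ < R := h

lemma hyperplane_null (n : ℕ) (c : ℝ) (i0 : Fin n) :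
    volume {z : EuclideanSpace ℝ (Fin n) | z i0 = c} = 0 := by
  set φ : EuclideanSpace ℝ (Fin n) →ₗ[ℝ] ℝ := EuclideanSpace.projₗ i0 with hφ
  set W := LinearMap.ker φ with hW
  have hWne : W ≠ ⊤ := by
    intro h
    have h1 : EuclideanSpace.single i0 (1:ℝ) ∈ W := h ▸ Submodule.mem_top
    rw [hW, LinearMap.mem_ker, hφ] at h1
    simp [EuclideanSpace.projₗ] at h1
  set p : EuclideanSpace ℝ (Fin n) := EuclideanSpace.single i0 c with hp
  have hset : {z : EuclideanSpace ℝ (Fin n) | z i0 = c} = (AffineSubspace.mk' p W : Set _) := by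
    ext z
    rw [mem_setOf_eq, SetLike.mem_coe, AffineSubspace.mem_mk']
    rw [hW, LinearMap.mem_ker, hφ]
    have : EuclideanSpace.projₗ (𝕜 := ℝ) i0 (z -ᵥ p) = z i0 - c := by
      simp [EuclideanSpace.projₗ, hp, vsub_eq_sub, EuclideanSpace.single_apply]
    rw [this]
    constructor <;> intro h <;> linarith
  rw [hset]
  refine Measure.addHaar_affineSubspace volume _ ?_
  intro h
  apply hWne
  have := AffineSubspace.direction_mk' p W
  rw [h, AffineSubspace.direction_top] at this
  exact this.symm

lemma integrableOn_norm_rpow_ball (n : ℕ) {s : ℝ} (hs : -(n:ℝ) < s) (hs0 : s < 0) (r : ℝ) :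
    IntegrableOn (fun y : EuclideanSpace ℝ (Fin n) => ‖y‖ ^ s) (ball 0 r) := by
  have hmeas : Measurable (fun y : EuclideanSpace ℝ (Fin n) => ‖y‖ ^ s) := by fun_prop
  constructor
  · exact hmeas.aestronglyMeasurable
  · have hnn : ∀ y : EuclideanSpace ℝ (Fin n), 0 ≤ ‖y‖ ^ s := fun y => rpow_nonneg (norm_nonneg _) _
    rw [HasFiniteIntegral, lintegral_enorm_of_nonneg hnn,
      lintegral_eq_lintegral_meas_le _ (Filter.Eventually.of_forall hnn) hmeas.aemeasurable]
    set E := EuclideanSpace ℝ (Fin n)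
    set μR := (volume : Measure (EuclideanSpace ℝ (Fin n))).restrict (ball 0 r) with hμR
    have hsi : s⁻¹ < 0 := inv_lt_zero.mpr hs0
    have hexp : (n:ℝ) * s⁻¹ < -1 := by
      nlinarith [mul_inv_cancel₀ (ne_of_lt hs0),
        mul_pos (neg_pos.mpr hsi) (by linarith : (0:ℝ) < (n:ℝ) + s)]
    calc ∫⁻ t in Ioi (0:ℝ), μR {a | t ≤ ‖a‖ ^ s}
        ≤ ∫⁻ t in Ioc (0:ℝ) 1 ∪ Ioi 1, μR {a | t ≤ ‖a‖ ^ s} :=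
          lintegral_mono_set Ioi_subset_Ioc_union_Ioi
      _ ≤ (∫⁻ t in Ioc (0:ℝ) 1, μR {a | t ≤ ‖a‖ ^ s}) + ∫⁻ t in Ioi 1, μR {a | t ≤ ‖a‖ ^ s} :=
          lintegral_union_le _ _ _
      _ < ⊤ := by
          refine ENNReal.add_lt_top.2 ⟨?_, ?_⟩
          · have h1 : (∫⁻ t in Ioc (0:ℝ) 1, μR {a | t ≤ ‖a‖ ^ s})
                ≤ ∫⁻ _ in Ioc (0:ℝ) 1, volume (ball (0:EuclideanSpace ℝ (Fin n)) r) := by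
              refine setLIntegral_mono' measurableSet_Ioc fun t _ => ?_
              exact (measure_mono (subset_univ _)).trans_eq (Measure.restrict_apply_univ _)
            refine h1.trans_lt ?_
            rw [setLIntegral_const]
            exact ENNReal.mul_lt_top measure_ball_lt_top measure_Ioc_lt_top
          · have h2 : (∫⁻ t in Ioi (1:ℝ), μR {a | t ≤ ‖a‖ ^ s})
                ≤ ∫⁻ t in Ioi (1:ℝ), ENNReal.ofReal (t ^ ((n:ℝ) * s⁻¹)) *
                    volume (ball (0:EuclideanSpace ℝ (Fin n)) 1) := by
              refine setLIntegral_mono' measurableSet_Ioi fun t ht => ?_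
              have ht0 : (0:ℝ) < t := lt_trans zero_lt_one ht
              have hsub : {a : EuclideanSpace ℝ (Fin n) | t ≤ ‖a‖ ^ s}
                  ⊆ closedBall 0 (t ^ s⁻¹) := by
                intro a ha
                simp only [mem_setOf_eq] at ha
                rcases eq_or_ne a 0 with rfl | h0
                · rw [norm_zero, Real.zero_rpow (ne_of_lt hs0)] at ha
                  exact absurd ha (not_le.mpr ht0)
                · have hna : 0 < ‖a‖ := norm_pos_iff.mpr h0
                  rw [mem_closedBall_zero_iff]
                  exact (Real.le_rpow_inv_iff_of_neg hna ht0 hs0).mpr ha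
              have hrad : 0 ≤ t ^ s⁻¹ := rpow_nonneg ht0.le _
              calc μR {a | t ≤ ‖a‖ ^ s}
                  ≤ volume {a : EuclideanSpace ℝ (Fin n) | t ≤ ‖a‖ ^ s} :=
                    Measure.restrict_apply_le _ _
                _ ≤ volume (closedBall (0:EuclideanSpace ℝ (Fin n)) (t ^ s⁻¹)) :=
                    measure_mono hsub
                _ = ENNReal.ofReal ((t ^ s⁻¹) ^ (Module.finrank ℝ (EuclideanSpace ℝ (Fin n)))) *
                    volume (ball (0:EuclideanSpace ℝ (Fin n)) 1) :=
                    Measure.addHaar_closedBall _ _ hrad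
                _ = ENNReal.ofReal (t ^ ((n:ℝ) * s⁻¹)) *
                    volume (ball (0:EuclideanSpace ℝ (Fin n)) 1) := by
                    rw [finrank_euclideanSpace_fin, ← Real.rpow_natCast (t ^ s⁻¹) n,
                      ← Real.rpow_mul ht0.le, mul_comm (s⁻¹)]
            refine h2.trans_lt ?_
            rw [lintegral_mul_const' _ _ measure_ball_lt_top.ne]
            exact ENNReal.mul_lt_top
              ((integrableOn_Ioi_rpow_of_lt hexp zero_lt_one).setLIntegral_lt_top)
              measure_ball_lt_top

lemma integrableOn_kernel (n : ℕ) {s : ℝ} (hs : -(n:ℝ) < s) (hs0 : s < 0)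
    (a : EuclideanSpace ℝ (Fin n)) (r : ℝ) :
    IntegrableOn (fun y : EuclideanSpace ℝ (Fin n) => ‖a - y‖ ^ s) (ball 0 r) := by
  have hmp : MeasurePreserving (fun y : EuclideanSpace ℝ (Fin n) => a - y)
      (volume : Measure (EuclideanSpace ℝ (Fin n))) volume :=
    Measure.measurePreserving_sub_left volume a
  have hinv : Function.Involutive (fun y : EuclideanSpace ℝ (Fin n) => a - y) :=
    fun y => sub_sub_cancel a y
  have hemb : MeasurableEmbedding (fun y : EuclideanSpace ℝ (Fin n) => a - y) :=
    (MeasurableEquiv.ofInvolutive _ hinv hmp.measurable).measurableEmbedding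
  have hbig := integrableOn_norm_rpow_ball n hs hs0 (‖a‖ + max r 0)
  have hsub : ball (0 : EuclideanSpace ℝ (Fin n)) r ⊆
      (fun y : EuclideanSpace ℝ (Fin n) => a - y) ⁻¹' (ball 0 (‖a‖ + max r 0)) := by
    intro y hy
    rw [mem_preimage, mem_ball_zero_iff]
    calc ‖a - y‖ ≤ ‖a‖ + ‖y‖ := norm_sub_le _ _
      _ < ‖a‖ + max r 0 := by
          have := mem_ball_zero_iff.mp hy
          have : ‖y‖ < max r 0 := lt_of_lt_of_le this (le_max_left _ _)
          linarith
  have := (hmp.integrableOn_comp_preimage hemb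
    (f := fun y : EuclideanSpace ℝ (Fin n) => ‖y‖ ^ s)
    (s := ball 0 (‖a‖ + max r 0))).mpr hbig
  exact this.mono_set hsub

lemma integrable_kernel_mul (n : ℕ) {s : ℝ} (hs : -(n:ℝ) < s) (hs0 : s < 0)
    (a c : EuclideanSpace ℝ (Fin n)) (M C : ℝ)
    (g : EuclideanSpace ℝ (Fin n) → ℝ) (hg : Measurable g) (hb : ∀ z, |g z| ≤ C)
    (hv : ∀ z ∉ ball c M, g z = 0) :
    Integrable (fun y => ‖a - y‖ ^ s * g y)
      (volume : Measure (EuclideanSpace ℝ (Fin n))) := by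
  set r : ℝ := ‖c‖ + max M 0 with hr
  have hv' : ∀ z ∉ ball (0 : EuclideanSpace ℝ (Fin n)) r, g z = 0 := by
    intro z hz
    refine hv z fun hzc => hz ?_
    rw [mem_ball_zero_iff]
    calc ‖z‖ ≤ ‖c‖ + ‖z - c‖ := norm_le_norm_add_norm_sub' z c
      _ < M + ‖c‖ := by
          have := mem_ball_iff_norm.mp hzc
          linarith
      _ ≤ r := by rw [hr]; have := le_max_left M (0:ℝ); linarith
  have hkermeas : Measurable (fun y : EuclideanSpace ℝ (Fin n) => ‖a - y‖ ^ s) := by fun_prop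
  have hdom : Integrable ((ball (0 : EuclideanSpace ℝ (Fin n)) r).indicator
      (fun y => C * ‖a - y‖ ^ s)) volume := by
    refine (IntegrableOn.integrable_indicator ?_ measurableSet_ball)
    exact (integrableOn_kernel n hs hs0 a r).const_mul C
  refine hdom.mono' ((hkermeas.mul hg).aestronglyMeasurable) (ae_of_all _ fun y => ?_)
  by_cases hy : y ∈ ball (0 : EuclideanSpace ℝ (Fin n)) r
  · rw [indicator_of_mem hy, Real.norm_eq_abs, abs_mul,
      abs_of_nonneg (rpow_nonneg (norm_nonneg _) _), mul_comm C]
    exact mul_le_mul_of_nonneg_left (hb y) (rpow_nonneg (norm_nonneg _) _)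
  · rw [indicator_of_notMem hy, hv' y hy, mul_zero, norm_zero]

theorem stmt12 (n : ℕ) (hn : 2 ≤ n) (α : ℝ) (hα1 : 0 < α) (hα2 : α < n)
    (R μ : ℝ) (hμ1 : -R < μ) (hμ2 : μ < 0)
    (ρ : EuclideanSpace ℝ (Fin n) → ℝ) (hmeas : Measurable ρ)
    (C : ℝ) (hbdd : ∀ z, |ρ z| ≤ C)
    (hvanish : ∀ z ∉ Metric.ball (0 : EuclideanSpace ℝ (Fin n)) R, ρ z = 0)
    (heq : ∀ x ∈ Metric.ball (0 : EuclideanSpace ℝ (Fin n)) R,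
      ρ x = α * ∫ y in Metric.ball (0 : EuclideanSpace ℝ (Fin n)) R,
        ‖x - y‖ ^ (α - n) * ρ y) :
    ∀ x, x ∈ Metric.ball (0 : EuclideanSpace ℝ (Fin n)) R → μ ≤ x ⟨0, by omega⟩ →
      x ∈ Metric.ball (reflect n μ 0) R →
      ρ x - ρ (reflect n μ x) =
        α * ∫ y in {z ∈ Metric.ball (0 : EuclideanSpace ℝ (Fin n)) R |
              μ ≤ z ⟨0, by omega⟩},
          (‖x - y‖ ^ (α - n) - ‖reflect n μ x - y‖ ^ (α - n)) *
            (ρ y - ρ (reflect n μ y)) := by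
  intro x hx1 hx2 hx3
  set i0 : Fin n := ⟨0, by omega⟩ with hi0
  have hi0v : (i0 : ℕ) = 0 := rfl
  have hinv := reflect_involutive n μ
  have hmp := measurePreserving_reflect n μ
  have hemb := measurableEmbedding_reflect n μ
  have hmix : ∀ a b : EuclideanSpace ℝ (Fin n),
      ‖a - reflect n μ b‖ = ‖reflect n μ a - b‖ := by
    intro a b
    conv_rhs => rw [← hinv b]
    exact (norm_reflect_sub n μ a (reflect n μ b)).symm
  have hs : -(n:ℝ) < α - n := by linarith
  have hs0 : α - (n:ℝ) < 0 := by linarith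
  have hmeasσ : Measurable (fun z => ρ (reflect n μ z)) := hmeas.comp hmp.measurable
  have hbddσ : ∀ z, |ρ (reflect n μ z)| ≤ C := fun z => hbdd _
  have hvanσ : ∀ z ∉ ball (reflect n μ 0) R, ρ (reflect n μ z) = 0 := by
    intro z hz
    exact hvanish _ (fun hzz => hz ((mem_ball_reflect n μ R z).mpr hzz))
  have hx1' : reflect n μ x ∈ ball (0 : EuclideanSpace ℝ (Fin n)) R :=
    (mem_ball_reflect n μ R x).mp hx3
  -- integrability
  have hInt1 : Integrable (fun y => ‖x - y‖ ^ (α - (n:ℝ)) * ρ y)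
      (volume : Measure (EuclideanSpace ℝ (Fin n))) :=
    integrable_kernel_mul n hs hs0 x 0 R C ρ hmeas hbdd hvanish
  have hInt2 : Integrable (fun y => ‖reflect n μ x - y‖ ^ (α - (n:ℝ)) * ρ y)
      (volume : Measure (EuclideanSpace ℝ (Fin n))) :=
    integrable_kernel_mul n hs hs0 (reflect n μ x) 0 R C ρ hmeas hbdd hvanish
  have hInt3 : Integrable (fun y => ‖x - y‖ ^ (α - (n:ℝ)) * ρ (reflect n μ y))
      (volume : Measure (EuclideanSpace ℝ (Fin n))) :=
    integrable_kernel_mul n hs hs0 x (reflect n μ 0) R C _ hmeasσ hbddσ hvanσ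
  have hInt4 : Integrable (fun y => ‖reflect n μ x - y‖ ^ (α - (n:ℝ)) * ρ (reflect n μ y))
      (volume : Measure (EuclideanSpace ℝ (Fin n))) :=
    integrable_kernel_mul n hs hs0 (reflect n μ x) (reflect n μ 0) R C _ hmeasσ hbddσ hvanσ
  -- sets
  set S : Set (EuclideanSpace ℝ (Fin n)) :=
    {z ∈ ball (0 : EuclideanSpace ℝ (Fin n)) R | μ ≤ z i0} with hSdef
  set T : Set (EuclideanSpace ℝ (Fin n)) :=
    {z ∈ ball (0 : EuclideanSpace ℝ (Fin n)) R | z i0 < μ} with hTdef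
  set D : Set (EuclideanSpace ℝ (Fin n)) :=
    {z ∈ ball (reflect n μ 0) R | μ < z i0} with hDdef
  have hφm : Measurable (fun z : EuclideanSpace ℝ (Fin n) => z i0) :=
    (measurable_pi_apply i0).comp (MeasurableEquiv.toLp 2 (Fin n → ℝ)).symm.measurable
  have hSm : MeasurableSet S := measurableSet_ball.inter (hφm measurableSet_Ici)
  have hTm : MeasurableSet T := measurableSet_ball.inter (hφm measurableSet_Iio)
  have hDm : MeasurableSet D := measurableSet_ball.inter (hφm measurableSet_Ioi)
  have hBdecomp : ball (0 : EuclideanSpace ℝ (Fin n)) R = S ∪ T := by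
    ext z
    constructor
    · intro hz
      rcases le_or_gt μ (z i0) with h | h
      exacts [Or.inl ⟨hz, h⟩, Or.inr ⟨hz, h⟩]
    · rintro (⟨h, _⟩ | ⟨h, _⟩) <;> exact h
  have hdisj : Disjoint S T := by
    rw [Set.disjoint_left]
    rintro z ⟨_, h1⟩ ⟨_, h2⟩
    exact absurd h1 (not_le.mpr h2)
  have hsplit : ∀ a : EuclideanSpace ℝ (Fin n),
      Integrable (fun y => ‖a - y‖ ^ (α - (n:ℝ)) * ρ y)
        (volume : Measure (EuclideanSpace ℝ (Fin n))) →
      ∫ y in ball (0 : EuclideanSpace ℝ (Fin n)) R, ‖a - y‖ ^ (α - (n:ℝ)) * ρ y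
        = (∫ y in S, ‖a - y‖ ^ (α - (n:ℝ)) * ρ y)
          + ∫ y in T, ‖a - y‖ ^ (α - (n:ℝ)) * ρ y := by
    intro a ha
    rw [hBdecomp]
    exact setIntegral_union hdisj hTm ha.integrableOn ha.integrableOn
  have hrefl_i0 : ∀ z : EuclideanSpace ℝ (Fin n), reflect n μ z i0 = 2 * μ - z i0 := by
    intro z
    show (if (i0 : ℕ) = 0 then 2 * μ - z i0 else z i0) = 2 * μ - z i0
    rw [if_pos hi0v]
  have hcv : ∀ a : EuclideanSpace ℝ (Fin n),
      ∫ y in T, ‖a - y‖ ^ (α - (n:ℝ)) * ρ y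
        = ∫ y in D, ‖reflect n μ a - y‖ ^ (α - (n:ℝ)) * ρ (reflect n μ y) := by
    intro a
    have hpre : reflect n μ ⁻¹' T = D := by
      ext z
      simp only [hTdef, hDdef, mem_preimage, Set.mem_sep_iff]
      constructor
      · rintro ⟨h1, h2⟩
        rw [hrefl_i0 z] at h2
        exact ⟨(mem_ball_reflect n μ R z).mpr h1, by linarith⟩
      · rintro ⟨h1, h2⟩
        rw [hrefl_i0 z]
        exact ⟨(mem_ball_reflect n μ R z).mp h1, by linarith⟩
    have hfun : (fun y => ‖a - reflect n μ y‖ ^ (α - (n:ℝ)) * ρ (reflect n μ y))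
        = fun y => ‖reflect n μ a - y‖ ^ (α - (n:ℝ)) * ρ (reflect n μ y) :=
      funext fun y => by rw [hmix a y]
    rw [← hmp.setIntegral_preimage_emb hemb
      (fun y => ‖a - y‖ ^ (α - (n:ℝ)) * ρ y) T, hpre]
    rw [hfun]
  have hDS : D ⊆ S := by
    rintro z ⟨h1, h2⟩
    have hz2 : μ ≤ z i0 := le_of_lt h2
    have hznorm : ‖z‖ ≤ ‖reflect n μ z‖ := norm_le_norm_reflect n μ hμ2 z i0 hi0v hz2
    have hzb : reflect n μ z ∈ ball (0 : EuclideanSpace ℝ (Fin n)) R :=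
      (mem_ball_reflect n μ R z).mp h1
    exact ⟨mem_ball_zero_iff.mpr (lt_of_le_of_lt hznorm (mem_ball_zero_iff.mp hzb)), hz2⟩
  have hext : ∀ a : EuclideanSpace ℝ (Fin n),
      Integrable (fun y => ‖a - y‖ ^ (α - (n:ℝ)) * ρ (reflect n μ y))
        (volume : Measure (EuclideanSpace ℝ (Fin n))) →
      ∫ y in D, ‖a - y‖ ^ (α - (n:ℝ)) * ρ (reflect n μ y)
        = ∫ y in S, ‖a - y‖ ^ (α - (n:ℝ)) * ρ (reflect n μ y) := by
    intro a ha
    have hSD : S = D ∪ (S \ D) := (union_diff_cancel hDS).symm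
    have hzero : ∫ y in S \ D, ‖a - y‖ ^ (α - (n:ℝ)) * ρ (reflect n μ y) = 0 := by
      have hN : volume {z : EuclideanSpace ℝ (Fin n) | z i0 = μ} = 0 := hyperplane_null n μ i0
      have hae : ∀ᵐ y ∂(volume : Measure (EuclideanSpace ℝ (Fin n))),
          y ∈ S \ D → ‖a - y‖ ^ (α - (n:ℝ)) * ρ (reflect n μ y) = 0 := by
        have h1 : ∀ᵐ y ∂(volume : Measure (EuclideanSpace ℝ (Fin n))),
            ¬ (y i0 = μ) := by
          rw [ae_iff]
          simpa using hN
        filter_upwards [h1] with y hy hySD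
        rcases hySD with ⟨⟨hyB, hyge⟩, hyD⟩
        have hygt : μ < y i0 := lt_of_le_of_ne hyge (fun h => hy h.symm)
        have hyB' : y ∉ ball (reflect n μ 0) R := fun hc => hyD ⟨hc, hygt⟩
        rw [hvanσ y hyB', mul_zero]
      exact integral_eq_zero_of_ae ((ae_restrict_iff' (hSm.diff hDm)).mpr hae)
    rw [hSD, setIntegral_union disjoint_sdiff_right (hSm.diff hDm)
      ha.integrableOn ha.integrableOn, hzero, add_zero]
  -- assemble
  have e1 : ρ x = α * ((∫ y in S, ‖x - y‖ ^ (α - (n:ℝ)) * ρ y)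
      + ∫ y in S, ‖reflect n μ x - y‖ ^ (α - (n:ℝ)) * ρ (reflect n μ y)) := by
    rw [heq x hx1, hsplit x hInt1, hcv x, hext (reflect n μ x) hInt4]
  have e2 : ρ (reflect n μ x) = α * ((∫ y in S, ‖reflect n μ x - y‖ ^ (α - (n:ℝ)) * ρ y)
      + ∫ y in S, ‖x - y‖ ^ (α - (n:ℝ)) * ρ (reflect n μ y)) := by
    rw [heq (reflect n μ x) hx1', hsplit (reflect n μ x) hInt2, hcv (reflect n μ x),
      hinv x, hext x hInt3]
  have hstep : (∫ y in S, (‖x - y‖ ^ (α - (n:ℝ)) - ‖reflect n μ x - y‖ ^ (α - (n:ℝ)))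
        * (ρ y - ρ (reflect n μ y)))
      = ∫ y in S, ((‖x - y‖ ^ (α - (n:ℝ)) * ρ y
          - ‖x - y‖ ^ (α - (n:ℝ)) * ρ (reflect n μ y))
        - (‖reflect n μ x - y‖ ^ (α - (n:ℝ)) * ρ y
          - ‖reflect n μ x - y‖ ^ (α - (n:ℝ)) * ρ (reflect n μ y))) :=
    integral_congr_ae (ae_of_all _ fun y => by ring)
  have h12 : (∫ y in S, ((‖x - y‖ ^ (α - (n:ℝ)) * ρ y
          - ‖x - y‖ ^ (α - (n:ℝ)) * ρ (reflect n μ y))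
        - (‖reflect n μ x - y‖ ^ (α - (n:ℝ)) * ρ y
          - ‖reflect n μ x - y‖ ^ (α - (n:ℝ)) * ρ (reflect n μ y))))
      = (∫ y in S, (‖x - y‖ ^ (α - (n:ℝ)) * ρ y
          - ‖x - y‖ ^ (α - (n:ℝ)) * ρ (reflect n μ y)))
        - ∫ y in S, (‖reflect n μ x - y‖ ^ (α - (n:ℝ)) * ρ y
          - ‖reflect n μ x - y‖ ^ (α - (n:ℝ)) * ρ (reflect n μ y)) :=
    integral_sub (hInt1.integrableOn.sub hInt3.integrableOn)
      (hInt2.integrableOn.sub hInt4.integrableOn)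
  have ha' : (∫ y in S, (‖x - y‖ ^ (α - (n:ℝ)) * ρ y
          - ‖x - y‖ ^ (α - (n:ℝ)) * ρ (reflect n μ y)))
      = (∫ y in S, ‖x - y‖ ^ (α - (n:ℝ)) * ρ y)
        - ∫ y in S, ‖x - y‖ ^ (α - (n:ℝ)) * ρ (reflect n μ y) :=
    integral_sub hInt1.integrableOn hInt3.integrableOn
  have hb' : (∫ y in S, (‖reflect n μ x - y‖ ^ (α - (n:ℝ)) * ρ y
          - ‖reflect n μ x - y‖ ^ (α - (n:ℝ)) * ρ (reflect n μ y)))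
      = (∫ y in S, ‖reflect n μ x - y‖ ^ (α - (n:ℝ)) * ρ y)
        - ∫ y in S, ‖reflect n μ x - y‖ ^ (α - (n:ℝ)) * ρ (reflect n μ y) :=
    integral_sub hInt2.integrableOn hInt4.integrableOn
  rw [e1, e2, hstep, h12, ha', hb']
  ring
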